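/- Calderón–Zygmund decomposition on an interval: let J = [a,b] with a < b and let h : ℝ → ℝ be integrable on J with (1/|J|) ∫_J |h(y)| dy ≤ 1. Then there exist a measurable set E ⊆ J and a countable family {J_i} of pairwise disjoint subintervals of J such that (i) |E| ≥ |J|/2; (ii) |h(x)| ≤ 2 for almost every x ∈ E; (iii) the union of the J_i coincides with J \ E up to a set of Lebesgue measure zero; and (iv) (1/|J_i|) ∫_{J_i} |h(y)| dy ≤ 4 for every i. -/

import Mathlib

open MeasureTheory Set

namespace CZ

noncomputable def len (a b : ℝ) (n : ℕ) : ℝ := (b - a) / 2 ^ n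

def D (a b : ℝ) (n k : ℕ) : Set ℝ :=
  Set.Ico (a + k * len a b n) (a + (k + 1) * len a b n)

noncomputable def avg (h : ℝ → ℝ) (s : Set ℝ) : ℝ := (∫ y in s, |h y|) / (volume s).toReal

def Bad (a b : ℝ) (h : ℝ → ℝ) (n k : ℕ) : Prop :=
  k < 2 ^ n ∧ 2 < avg h (D a b n k) ∧ ∀ m, m < n → avg h (D a b m (k / 2 ^ (n - m))) ≤ 2

variable {a b : ℝ} {h : ℝ → ℝ} {n k n' k' m : ℕ}

lemma len_pos (hab : a < b) (n : ℕ) : 0 < len a b n := by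
  have : (0:ℝ) < 2 ^ n := by positivity
  exact div_pos (by linarith) this

lemma vol_D : volume (D a b n k) = ENNReal.ofReal (len a b n) := by
  simp [D, Real.volume_Ico]
  ring_nf

lemma toReal_vol_D (hab : a < b) : (volume (D a b n k)).toReal = len a b n := by
  rw [vol_D, ENNReal.toReal_ofReal (len_pos hab n).le]

lemma D_subset_Icc (hab : a < b) (hk : k < 2 ^ n) : D a b n k ⊆ Set.Icc a b := by
  have hl := len_pos hab n
  intro x hx
  obtain ⟨h1, h2⟩ := hx
  constructor
  · nlinarith [Nat.cast_nonneg (α := ℝ) k]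
  · have hk' : (k:ℝ) + 1 ≤ 2 ^ n := by exact_mod_cast Nat.succ_le_of_lt hk
    have h2n : (2:ℝ) ^ n * len a b n = b - a := by
      rw [len]
      field_simp
    nlinarith

lemma D_subset_D (hab : a < b) (hnn' : n ≤ n') : D a b n' k' ⊆ D a b n (k' / 2 ^ (n' - n)) := by
  have hl := len_pos hab n'
  have hpow : (2:ℝ) ^ n' = 2 ^ (n' - n) * 2 ^ n := by
    rw [← pow_add, Nat.sub_add_cancel hnn']
  have hlen : len a b n = 2 ^ (n' - n) * len a b n' := by
    rw [len, len, hpow]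
    field_simp
  intro x hx
  obtain ⟨h1, h2⟩ := hx
  constructor
  · have hdm : ((k' / 2 ^ (n' - n) : ℕ) : ℝ) * 2 ^ (n' - n) ≤ (k' : ℝ) := by
      exact_mod_cast Nat.div_mul_le_self k' (2 ^ (n' - n))
    rw [hlen]
    nlinarith
  · have hdm : (k' : ℝ) + 1 ≤ (((k' / 2 ^ (n' - n) : ℕ) : ℝ) + 1) * 2 ^ (n' - n) := by
      have hM : 0 < 2 ^ (n' - n) := pow_pos (by norm_num) _
      have := (Nat.div_lt_iff_lt_mul hM).mp (Nat.lt_succ_self (k' / 2 ^ (n' - n)))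
      exact_mod_cast Nat.succ_le_of_lt this
    rw [hlen]
    nlinarith

lemma D_disjoint (hab : a < b) (hkk' : k ≠ k') : Disjoint (D a b n k) (D a b n k') := by
  have hl := len_pos hab n
  rw [D, D, Set.Ico_disjoint_Ico]
  rcases Nat.lt_or_ge k k' with hlt | hlt
  · have : (k:ℝ) + 1 ≤ k' := by exact_mod_cast Nat.succ_le_of_lt hlt
    refine le_trans (min_le_left _ _) (le_max_of_le_right ?_)
    nlinarith
  · have hlt' : k' < k := lt_of_le_of_ne hlt (Ne.symm hkk')
    have : (k':ℝ) + 1 ≤ k := by exact_mod_cast Nat.succ_le_of_lt hlt'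
    refine le_trans (min_le_right _ _) (le_max_of_le_left ?_)
    nlinarith

lemma eq_of_mem_D (hab : a < b) (hk : x ∈ D a b n k) (hk' : x ∈ D a b n k') : k = k' := by
  by_contra hne
  exact (D_disjoint hab hne).ne_of_mem hk hk' rfl

noncomputable def kx (a b x : ℝ) (n : ℕ) : ℕ := ⌊(x - a) / len a b n⌋₊

lemma mem_D_kx (hab : a < b) (hx : x ∈ Set.Ico a b) : x ∈ D a b n (kx a b x n) ∧ kx a b x n < 2 ^ n := by
  have hl := len_pos hab n
  have hnn : 0 ≤ (x - a) / len a b n := div_nonneg (by linarith [hx.1]) hl.le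
  have hfl := Nat.floor_le hnn
  have hfl' := Nat.lt_floor_add_one ((x - a) / len a b n)
  constructor
  · constructor
    · rw [kx]
      have := mul_le_mul_of_nonneg_right hfl hl.le
      rw [div_mul_cancel₀ _ hl.ne'] at this
      linarith
    · rw [kx]
      have := mul_lt_mul_of_pos_right hfl' hl
      rw [div_mul_cancel₀ _ hl.ne'] at this
      linarith
  · rw [kx]
    have hxb : (x - a) / len a b n < 2 ^ n := by
      rw [div_lt_iff₀ hl, len]
      have : (0:ℝ) < 2 ^ n := by positivity
      field_simp
      linarith [hx.2]
    exact_mod_cast (Nat.floor_lt hnn).mpr (by exact_mod_cast hxb)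

end CZ

namespace CZ
variable {a b : ℝ} {h : ℝ → ℝ} {n k n' k' m : ℕ} {x : ℝ}

lemma integrableOn_D (hab : a < b) (hint : IntegrableOn h (Set.Icc a b)) (hk : k < 2 ^ n) :
    IntegrableOn (fun y => |h y|) (D a b n k) := by
  have habs : IntegrableOn (fun y => |h y|) (Set.Icc a b) := hint.abs
  exact habs.mono_set (D_subset_Icc hab hk)

lemma integral_D_nonneg : 0 ≤ ∫ y in D a b n k, |h y| :=
  setIntegral_nonneg measurableSet_Ico (fun y _ => abs_nonneg _)

lemma D_zero : D a b 0 0 = Set.Ico a b := by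
  simp [D, len]

lemma avg_zero_le (hab : a < b)
    (havg : (∫ y in Set.Icc a b, |h y|) / (volume (Set.Icc a b)).toReal ≤ 1) :
    avg h (D a b 0 0) ≤ 2 := by
  have : avg h (D a b 0 0) ≤ 1 := by
    rw [avg, D_zero, ← integral_Icc_eq_integral_Ico, Real.volume_Ico, ← Real.volume_Icc]
    exact havg
  linarith

lemma bad_pos (hab : a < b)
    (havg : (∫ y in Set.Icc a b, |h y|) / (volume (Set.Icc a b)).toReal ≤ 1)
    (hbad : Bad a b h n k) : 0 < n := by
  rcases Nat.eq_zero_or_pos n with rfl | hn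
  · have hk : k = 0 := by have := hbad.1; omega
    subst hk
    linarith [avg_zero_le hab havg, hbad.2.1]
  · exact hn

/-- (iv): every bad interval has average at most 4. -/
lemma bad_avg_le_four (hab : a < b) (hint : IntegrableOn h (Set.Icc a b))
    (havg : (∫ y in Set.Icc a b, |h y|) / (volume (Set.Icc a b)).toReal ≤ 1)
    (hbad : Bad a b h n k) : avg h (D a b n k) ≤ 4 := by
  have hpos : 0 < n := bad_pos hab havg hbad
  obtain ⟨hk, hgt, hanc⟩ := hbad
  obtain ⟨m, rfl⟩ : ∃ m, n = m + 1 := ⟨n - 1, by omega⟩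
  · have hm : m < m + 1 := Nat.lt_succ_self m
    have hparent := hanc m hm
    have hsub : D a b (m+1) k ⊆ D a b m (k / 2 ^ (m + 1 - m)) := D_subset_D hab (Nat.le_succ m)
    have hkp : k / 2 ^ (m + 1 - m) < 2 ^ m := by
      have h1 : m + 1 - m = 1 := by omega
      rw [h1, pow_one]
      rw [pow_succ] at hk
      omega
    have hmono : (∫ y in D a b (m+1) k, |h y|) ≤ ∫ y in D a b m (k / 2 ^ (m + 1 - m)), |h y| := by
      apply setIntegral_mono_set (integrableOn_D hab hint hkp)
      · exact Filter.Eventually.of_forall (fun y => abs_nonneg _)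
      · exact HasSubset.Subset.eventuallyLE hsub
    have hlp := len_pos hab (m+1)
    have hlp' := len_pos hab m
    have hlen2 : len a b m = 2 * len a b (m+1) := by
      rw [len, len, pow_succ]
      ring
    have hparent' : (∫ y in D a b m (k / 2 ^ (m + 1 - m)), |h y|) ≤ 2 * len a b m := by
      rw [avg, toReal_vol_D hab, div_le_iff₀ hlp'] at hparent
      linarith
    rw [avg, toReal_vol_D hab, div_le_iff₀ hlp]
    linarith

lemma bad_disjoint (hab : a < b) :
    ∀ p p' : ℕ × ℕ, Bad a b h p.1 p.2 → Bad a b h p'.1 p'.2 → p ≠ p' →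
      Disjoint (D a b p.1 p.2) (D a b p'.1 p'.2) := by
  have key : ∀ n k n' k', n ≤ n' → Bad a b h n k → Bad a b h n' k' → (n, k) ≠ (n', k') →
      Disjoint (D a b n k) (D a b n' k') := by
    intro n k n' k' hle hb hb' hne
    rcases eq_or_lt_of_le hle with rfl | hlt
    · have hkk : k ≠ k' := by simpa using hne
      exact D_disjoint hab hkk
    · have hja : k' / 2 ^ (n' - n) ≠ k := by
        intro heq
        have := hb'.2.2 n hlt
        rw [heq] at this
        linarith [hb.2.1]
      exact (Disjoint.mono_right (D_subset_D hab hle) (D_disjoint hab (Ne.symm hja)))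
  intro p p' hb hb' hne
  rcases le_total p.1 p'.1 with hle | hle
  · exact key _ _ _ _ hle hb hb' (by simpa [Prod.ext_iff] using hne)
  · exact (key _ _ _ _ hle hb' hb (by simp [Prod.ext_iff] at hne ⊢; tauto)).symm

lemma avg_kx_le (hab : a < b) (hx : x ∈ Set.Ico a b)
    (hnb : ∀ n k, Bad a b h n k → x ∉ D a b n k) :
    ∀ n, avg h (D a b n (kx a b x n)) ≤ 2 := by
  intro n
  induction n using Nat.strong_induction_on with
  | _ n ih =>
    by_contra hgt
    push_neg at hgt
    have hbad : Bad a b h n (kx a b x n) := by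
      refine ⟨(mem_D_kx hab hx).2, hgt, fun m hm => ?_⟩
      have heq : kx a b x n / 2 ^ (n - m) = kx a b x m := by
        apply eq_of_mem_D hab (D_subset_D hab hm.le (mem_D_kx hab hx).1) (mem_D_kx hab hx).1
      rw [heq]
      exact ih m hm
    exact hnb n _ hbad (mem_D_kx hab hx).1

end CZ


/-- `I` is a bounded interval of positive length in `ℝ`. -/
def IsBddInterval (I : Set ℝ) : Prop :=
  ∃ a b : ℝ, a < b ∧ Set.Ioo a b ⊆ I ∧ I ⊆ Set.Icc a b

/-- Calderón–Zygmund decomposition on an interval `J = [a,b]`. -/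
theorem calderon_zygmund_decomposition (a b : ℝ) (hab : a < b) (h : ℝ → ℝ)
    (hint : IntegrableOn h (Set.Icc a b))
    (havg : (∫ y in Set.Icc a b, |h y|) / (volume (Set.Icc a b)).toReal ≤ 1) :
    ∃ (E : Set ℝ) (K : ℕ → Set ℝ) (S : Set ℕ),
      MeasurableSet E ∧ E ⊆ Set.Icc a b ∧
      -- (i) E has at least half the measure of J
      (volume (Set.Icc a b)).toReal / 2 ≤ (volume E).toReal ∧
      -- (ii) |h| ≤ 2 a.e. on E
      (∀ᵐ x ∂volume, x ∈ E → |h x| ≤ 2) ∧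
      -- the J_i are pairwise disjoint subintervals of J
      (∀ i ∈ S, IsBddInterval (K i) ∧ K i ⊆ Set.Icc a b) ∧
      S.PairwiseDisjoint K ∧
      -- (iii) ⋃ J_i = J \ E up to measure zero
      volume (symmDiff (⋃ i ∈ S, K i) (Set.Icc a b \ E)) = 0 ∧
      -- (iv) the average of |h| over each J_i is at most 4
      (∀ i ∈ S, (∫ y in K i, |h y|) / (volume (K i)).toReal ≤ 4) := by
  classical
  set S : Set ℕ := {e | CZ.Bad a b h (Nat.unpair e).1 (Nat.unpair e).2} with hS
  set K : ℕ → Set ℝ := fun e => CZ.D a b (Nat.unpair e).1 (Nat.unpair e).2 with hK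
  set U : Set ℝ := ⋃ e ∈ S, K e with hU
  have hKmeas : ∀ e, MeasurableSet (K e) := fun e => measurableSet_Ico
  have hKsub : ∀ e ∈ S, K e ⊆ Set.Icc a b := fun e he => CZ.D_subset_Icc hab he.1
  have hUsub : U ⊆ Set.Icc a b := by
    rw [hU]
    exact Set.iUnion₂_subset hKsub
  have hUmeas : MeasurableSet U :=
    MeasurableSet.biUnion (Set.to_countable S) (fun e _ => hKmeas e)
  have hPD : S.PairwiseDisjoint K := by
    intro e he e' he' hne
    refine CZ.bad_disjoint hab (Nat.unpair e) (Nat.unpair e') he he' (fun hpe => hne ?_)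
    rw [← Nat.pair_unpair e, ← Nat.pair_unpair e', hpe]
  set E : Set ℝ := Set.Icc a b \ U with hE
  have hEmeas : MeasurableSet E := measurableSet_Icc.diff hUmeas
  have hEsub : E ⊆ Set.Icc a b := Set.diff_subset
  have hvolIcc : (volume (Set.Icc a b)).toReal = b - a := by
    rw [Real.volume_Icc, ENNReal.toReal_ofReal (by linarith)]
  have habs : IntegrableOn (fun y => |h y|) (Set.Icc a b) := hint.abs
  -- (i)
  have hvolU : volume U = ∑' (e : S), volume (K e) :=
    measure_biUnion (Set.to_countable S) hPD (fun e _ => hKmeas e)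
  have hIabs_le : (∫ y in Set.Icc a b, |h y|) ≤ b - a := by
    rw [hvolIcc, div_le_one (by linarith)] at havg
    exact havg
  have hsum : HasSum (fun e : S => ∫ y in K e, |h y|) (∫ y in U, |h y|) := by
    have hpw : Pairwise (Function.onFun Disjoint (fun e : S => K e)) :=
      fun i j hij => hPD i.2 j.2 (Subtype.coe_ne_coe.mpr hij)
    have hUeq : (⋃ e : S, K e) = U := by
      rw [hU]; ext y; simp
    have hIntU : IntegrableOn (fun y => |h y|) (⋃ e : S, K e) := by
      rw [hUeq]
      exact habs.mono_set hUsub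
    have := hasSum_integral_iUnion (μ := volume) (fun e : S => hKmeas e) hpw hIntU
    rwa [hUeq] at this
  have hUIle : (∫ y in U, |h y|) ≤ b - a := by
    refine le_trans (setIntegral_mono_set habs ?_ hUsub.eventuallyLE) hIabs_le
    exact Filter.Eventually.of_forall (fun y => abs_nonneg _)
  have hlenle : ∀ e : S, 2 * (volume (K e)).toReal ≤ ∫ y in K e, |h y| := by
    intro e
    have hb2 := e.2.2.1
    have hlp : 0 < (volume (K e)).toReal := by
      rw [hK, CZ.toReal_vol_D hab]
      exact CZ.len_pos hab _
    rw [CZ.avg, lt_div_iff₀ hlp] at hb2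
    linarith
  have hsummable2 : Summable (fun e : S => 2 * (volume (K e)).toReal) :=
    Summable.of_nonneg_of_le (fun e => by positivity) hlenle hsum.summable
  have htsum_le : ∑' (e : S), 2 * (volume (K e)).toReal ≤ b - a := by
    refine le_trans (le_trans (Summable.tsum_le_tsum hlenle hsummable2 hsum.summable) ?_) hUIle
    rw [hsum.tsum_eq]
  have hvolU_toReal : (volume U).toReal ≤ (b - a) / 2 := by
    have heq : (volume U).toReal = ∑' (e : S), (volume (K e)).toReal := by
      rw [hvolU, ENNReal.tsum_toReal_eq]
      intro e
      rw [hK, CZ.vol_D]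
      exact ENNReal.ofReal_ne_top
    rw [heq]
    rw [tsum_mul_left] at htsum_le
    linarith
  have hUne_top : volume U ≠ ⊤ := by
    refine ne_top_of_le_ne_top ?_ (measure_mono hUsub)
    rw [Real.volume_Icc]
    exact ENNReal.ofReal_ne_top
  have hvolE : (volume E).toReal = (b - a) - (volume U).toReal := by
    rw [hE, measure_diff hUsub hUmeas.nullMeasurableSet hUne_top,
      ENNReal.toReal_sub_of_le (measure_mono hUsub) (by rw [Real.volume_Icc]; exact ENNReal.ofReal_ne_top),
      hvolIcc]
  refine ⟨E, K, S, hEmeas, hEsub, ?_, ?_, ?_, hPD, ?_, ?_⟩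
  · -- (i)
    rw [hvolIcc, hvolE]
    linarith
  · -- (ii)
    set f : ℝ → ℝ := (Set.Icc a b).indicator (fun y => |h y|) with hf
    have hf_int : Integrable f volume := habs.integrable_indicator measurableSet_Icc
    have hf_loc : LocallyIntegrable f volume := hf_int.locallyIntegrable
    filter_upwards [IsUnifLocDoublingMeasure.ae_tendsto_average (μ := (volume : Measure ℝ)) hf_loc 1,
      measure_eq_zero_iff_ae_notMem.mp (measure_singleton b)] with x hx hxb hxE
    have hxI : x ∈ Set.Ico a b :=
      ⟨hxE.1.1, lt_of_le_of_ne hxE.1.2 (by simpa using hxb)⟩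
    have hnb : ∀ n k, CZ.Bad a b h n k → x ∉ CZ.D a b n k := by
      intro n k hbad hmem
      refine hxE.2 (Set.mem_biUnion (show Nat.pair n k ∈ S from ?_) ?_)
      · show CZ.Bad a b h (Nat.unpair (Nat.pair n k)).1 (Nat.unpair (Nat.pair n k)).2
        rw [Nat.unpair_pair]
        exact hbad
      · show x ∈ CZ.D a b (Nat.unpair (Nat.pair n k)).1 (Nat.unpair (Nat.pair n k)).2
        rw [Nat.unpair_pair]
        exact hmem
    have havgs := CZ.avg_kx_le hab hxI hnb
    set w : ℕ → ℝ := fun n => (a + CZ.kx a b x n * CZ.len a b n) + CZ.len a b n / 2 with hw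
    set δ : ℕ → ℝ := fun n => CZ.len a b n / 2 with hδdef
    have hδ : Filter.Tendsto δ Filter.atTop (nhdsWithin 0 (Set.Ioi 0)) := by
      rw [tendsto_nhdsWithin_iff]
      constructor
      · have heq : δ = fun n : ℕ => ((b - a) / 2) * (2⁻¹ : ℝ) ^ n := by
          funext n
          rw [hδdef]
          simp only [CZ.len]
          rw [inv_pow]
          field_simp
        rw [heq]
        have := tendsto_pow_atTop_nhds_zero_of_lt_one (by norm_num : (0:ℝ) ≤ 2⁻¹)
          (by norm_num : (2⁻¹:ℝ) < 1)
        simpa using this.const_mul ((b - a) / 2)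
      · exact Filter.Eventually.of_forall (fun n => half_pos (CZ.len_pos hab n))
    have hmem : ∀ᶠ j in Filter.atTop, x ∈ Metric.closedBall (w j) (1 * δ j) := by
      refine Filter.Eventually.of_forall (fun n => ?_)
      have hmemD := (CZ.mem_D_kx (n := n) hab hxI).1
      rw [Real.closedBall_eq_Icc, one_mul]
      obtain ⟨h1, h2⟩ := hmemD
      constructor
      · simp only [hw, hδdef]
        linarith
      · simp only [hw, hδdef]
        linarith
    have htend := hx w δ hδ hmem
    have hterm : ∀ n : ℕ, (⨍ y in Metric.closedBall (w n) (δ n), f y) ≤ 2 := by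
      intro n
      have hlp := CZ.len_pos hab n
      have hcb : Metric.closedBall (w n) (δ n) =
          Set.Icc (a + CZ.kx a b x n * CZ.len a b n) (a + (CZ.kx a b x n + 1) * CZ.len a b n) := by
        rw [Real.closedBall_eq_Icc, hw, hδdef]
        congr 1 <;> ring
      have hvol : (volume (Metric.closedBall (w n) (δ n))).toReal = CZ.len a b n := by
        rw [hcb, Real.volume_Icc, ENNReal.toReal_ofReal (by nlinarith [Nat.cast_nonneg (α := ℝ) (CZ.kx a b x n)])]
        ring
      have hintf : (∫ y in Metric.closedBall (w n) (δ n), f y) =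
          ∫ y in CZ.D a b n (CZ.kx a b x n), |h y| := by
        rw [hcb, integral_Icc_eq_integral_Ico]
        have hIco : Set.Ico (a + CZ.kx a b x n * CZ.len a b n)
            (a + (CZ.kx a b x n + 1) * CZ.len a b n) = CZ.D a b n (CZ.kx a b x n) := rfl
        rw [hIco, hf, setIntegral_indicator measurableSet_Icc,
          Set.inter_eq_self_of_subset_left (CZ.D_subset_Icc hab (CZ.mem_D_kx hab hxI).2)]
      rw [setAverage_eq, hintf, measureReal_def, hvol, smul_eq_mul]
      have := havgs n
      rw [CZ.avg, CZ.toReal_vol_D hab, div_eq_inv_mul] at this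
      exact this
    have hfx : f x ≤ 2 := le_of_tendsto htend (Filter.Eventually.of_forall hterm)
    rwa [hf, Set.indicator_of_mem hxE.1] at hfx
  · -- subintervals
    intro i hi
    refine ⟨⟨a + (Nat.unpair i).2 * CZ.len a b (Nat.unpair i).1,
      a + ((Nat.unpair i).2 + 1) * CZ.len a b (Nat.unpair i).1, ?_, Set.Ioo_subset_Ico_self,
      Set.Ico_subset_Icc_self⟩, hKsub i hi⟩
    nlinarith [CZ.len_pos hab (Nat.unpair i).1]
  · -- (iii)
    have hEcompl : Set.Icc a b \ E = U := Set.diff_diff_cancel_left hUsub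
    rw [hEcompl, ← hU, symmDiff_self]
    exact measure_empty
  · -- (iv)
    intro i hi
    exact CZ.bad_avg_le_four hab hint havg hi
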